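/- Let f : Ω → ℝᵐ, Ω ⊆ ℝⁿ open, be continuous, and let x ∈ Ω. Then the SC derivative of f satisfies 𝒮f(x) ⊇ {rge(I_n, A) | A ∈ ∇̄f(x)} and the adjoint SC derivative satisfies 𝒮*f(x) ⊇ {rge(I_m, Aᵀ) | A ∈ ∇̄f(x)}. If f is Lipschitz near x, these inclusions hold with equality and f has the SCD property at all points sufficiently close to x. -/

import Mathlib

open Filter Topology Set Module RealInnerProductSpace
set_option linter.unusedSectionVars false
set_option linter.unusedVariables false
set_option maxHeartbeats 1000000

/-- Join a pair into a Euclidean space on a sum index type. -/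
noncomputable def emb {α β : Type*} [Fintype α] [Fintype β]
    (x : EuclideanSpace ℝ α) (y : EuclideanSpace ℝ β) : EuclideanSpace ℝ (α ⊕ β) :=
  WithLp.toLp 2 (fun s => Sum.elim (fun i => x i) (fun j => y j) s)

/-- Orthogonal projection onto a subspace as an endomap. -/
noncomputable def projCLM {ι : Type*} [Fintype ι] (L : Submodule ℝ (EuclideanSpace ℝ ι)) :
    EuclideanSpace ℝ ι →L[ℝ] EuclideanSpace ℝ ι :=
  L.subtypeL.comp (L.orthogonalProjectionOnto)

/-- The projection metric `d(L₁,L₂) = ‖P₁ - P₂‖` on subspaces. -/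
noncomputable def dZ {ι : Type*} [Fintype ι] (L₁ L₂ : Submodule ℝ (EuclideanSpace ℝ ι)) : ℝ :=
  ‖projCLM L₁ - projCLM L₂‖

/-- The SC derivative of a set `S` (a graph) at `w ∈ S`, for dimension `d`: all `d`-dimensional
subspaces arising as limits (in the projection metric) of tangent spaces at points of `S` where
`S` is graphically smooth of dimension `d`. -/
noncomputable def SCderivSet {ι : Type*} [Fintype ι] (S : Set (EuclideanSpace ℝ ι))
    (w : EuclideanSpace ℝ ι) (d : ℕ) : Set (Submodule ℝ (EuclideanSpace ℝ ι)) :=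
  {L | finrank ℝ L = d ∧
    ∃ (wk : ℕ → EuclideanSpace ℝ ι) (Lk : ℕ → Submodule ℝ (EuclideanSpace ℝ ι)),
      (∀ k, wk k ∈ S ∧ finrank ℝ (Lk k) = d ∧
        ((Lk k : Set (EuclideanSpace ℝ ι)) = tangentConeAt ℝ S (wk k))) ∧
      Tendsto wk atTop (𝓝 w) ∧ Tendsto (fun k => dZ (Lk k) L) atTop (𝓝 0)}

/-- The linear map `(a, b) ↦ (b, -a)`, used to define the adjoint subspace. -/
noncomputable def swapNeg (α β : Type*) [Fintype α] [Fintype β] :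
    EuclideanSpace ℝ (β ⊕ α) →ₗ[ℝ] EuclideanSpace ℝ (α ⊕ β) where
  toFun w := WithLp.toLp 2 (fun s => Sum.elim (fun i : α => w (Sum.inr i)) (fun j : β => -(w (Sum.inl j))) s)
  map_add' u v := by
    ext s
    cases s with
    | inl i => show (u + v) (Sum.inr i) = u (Sum.inr i) + v (Sum.inr i); rfl
    | inr j =>
        show -((u + v) (Sum.inl j)) = -(u (Sum.inl j)) + -(v (Sum.inl j))
        show -((u (Sum.inl j)) + (v (Sum.inl j))) = _
        ring
  map_smul' c u := by
    ext s
    cases s with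
    | inl i => rfl
    | inr j =>
        show -((c • u) (Sum.inl j)) = c * -(u (Sum.inl j))
        show -(c * (u (Sum.inl j))) = c * -(u (Sum.inl j))
        ring

/-- The adjoint subspace `L* = {(-v*, u*) | (u*, v*) ∈ L^⊥}`. -/
noncomputable def adjSub {α β : Type*} [Fintype α] [Fintype β]
    (L : Submodule ℝ (EuclideanSpace ℝ (α ⊕ β))) : Submodule ℝ (EuclideanSpace ℝ (β ⊕ α)) :=
  Lᗮ.comap (swapNeg α β)

/-- `rge(I, A) = {(p, Ap)}` as a subspace of the sum Euclidean space. -/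
noncomputable def graphSub {α β : Type*} [Fintype α] [Fintype β]
    (A : EuclideanSpace ℝ α →L[ℝ] EuclideanSpace ℝ β) :
    Submodule ℝ (EuclideanSpace ℝ (α ⊕ β)) :=
  LinearMap.range
    ({ toFun := fun p => emb p (A p)
       map_add' := by
         intro p q
         ext s
         cases s with
         | inl i => show (p + q) i = p i + q i; rfl
         | inr j => show (A (p + q)) j = (A p) j + (A q) j; rw [map_add]; rfl
       map_smul' := by
         intro c p
         ext s
         cases s with
         | inl i => show (c • p) i = c * p i; rfl
         | inr j => show (A (c • p)) j = c * (A p) j; rw [map_smul]; rfl } :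
      EuclideanSpace ℝ α →ₗ[ℝ] EuclideanSpace ℝ (α ⊕ β))

/-- The B-Jacobian of `f` at `x`, relative to the open set `Ω`. -/
noncomputable def BJac {n m : ℕ} (Ω : Set (EuclideanSpace ℝ (Fin n)))
    (f : EuclideanSpace ℝ (Fin n) → EuclideanSpace ℝ (Fin m))
    (x : EuclideanSpace ℝ (Fin n)) : Set (EuclideanSpace ℝ (Fin n) →L[ℝ] EuclideanSpace ℝ (Fin m)) :=
  {A | ∃ xk : ℕ → EuclideanSpace ℝ (Fin n),
      (∀ k, xk k ∈ Ω ∧ DifferentiableAt ℝ f (xk k)) ∧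
      Tendsto xk atTop (𝓝 x) ∧ Tendsto (fun k => fderiv ℝ f (xk k)) atTop (𝓝 A)}

/-- The graph of `f` over `Ω`, inside the sum Euclidean space. -/
noncomputable def gphFun {n m : ℕ} (Ω : Set (EuclideanSpace ℝ (Fin n)))
    (f : EuclideanSpace ℝ (Fin n) → EuclideanSpace ℝ (Fin m)) :
    Set (EuclideanSpace ℝ (Fin n ⊕ Fin m)) :=
  {w | ∃ x ∈ Ω, w = emb x (f x)}

/-- SC derivative of a single-valued map `f` at `x`. -/
noncomputable def SCderivFun {n m : ℕ} (Ω : Set (EuclideanSpace ℝ (Fin n)))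
    (f : EuclideanSpace ℝ (Fin n) → EuclideanSpace ℝ (Fin m)) (x : EuclideanSpace ℝ (Fin n)) :
    Set (Submodule ℝ (EuclideanSpace ℝ (Fin n ⊕ Fin m))) :=
  SCderivSet (gphFun Ω f) (emb x (f x)) n

/-- Adjoint SC derivative of `f` at `x`. -/
noncomputable def SCderivStarFun {n m : ℕ} (Ω : Set (EuclideanSpace ℝ (Fin n)))
    (f : EuclideanSpace ℝ (Fin n) → EuclideanSpace ℝ (Fin m)) (x : EuclideanSpace ℝ (Fin n)) :
    Set (Submodule ℝ (EuclideanSpace ℝ (Fin m ⊕ Fin n))) :=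
  {M | ∃ L ∈ SCderivFun Ω f x, M = adjSub L}




section Basics
variable {α β : Type*} [Fintype α] [Fintype β]

noncomputable def fstE (w : EuclideanSpace ℝ (α ⊕ β)) : EuclideanSpace ℝ α :=
  WithLp.toLp 2 (fun i => w (Sum.inl i))
noncomputable def sndE (w : EuclideanSpace ℝ (α ⊕ β)) : EuclideanSpace ℝ β :=
  WithLp.toLp 2 (fun j => w (Sum.inr j))

@[simp] lemma fstE_emb (x : EuclideanSpace ℝ α) (y : EuclideanSpace ℝ β) : fstE (emb x y) = x := rfl
@[simp] lemma sndE_emb (x : EuclideanSpace ℝ α) (y : EuclideanSpace ℝ β) : sndE (emb x y) = y := rfl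

lemma emb_fstE_sndE (w : EuclideanSpace ℝ (α ⊕ β)) : emb (fstE w) (sndE w) = w := by
  ext s; cases s <;> rfl

lemma fstE_add (u v : EuclideanSpace ℝ (α ⊕ β)) : fstE (u + v) = fstE u + fstE v := rfl
lemma fstE_smul (c : ℝ) (u : EuclideanSpace ℝ (α ⊕ β)) : fstE (c • u) = c • fstE u := rfl

noncomputable def fstL : EuclideanSpace ℝ (α ⊕ β) →L[ℝ] EuclideanSpace ℝ α :=
  LinearMap.toContinuousLinearMap
    { toFun := fstE, map_add' := fun _ _ => rfl, map_smul' := fun _ _ => rfl }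

noncomputable def sndL : EuclideanSpace ℝ (α ⊕ β) →L[ℝ] EuclideanSpace ℝ β :=
  LinearMap.toContinuousLinearMap
    { toFun := sndE, map_add' := fun _ _ => rfl, map_smul' := fun _ _ => rfl }

@[simp] lemma fstL_apply (w : EuclideanSpace ℝ (α ⊕ β)) : fstL w = fstE w := rfl
@[simp] lemma sndL_apply (w : EuclideanSpace ℝ (α ⊕ β)) : sndL w = sndE w := rfl

noncomputable def JlL : EuclideanSpace ℝ α →L[ℝ] EuclideanSpace ℝ (α ⊕ β) :=
  LinearMap.toContinuousLinearMap
    { toFun := fun a => emb a 0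
      map_add' := by
        intro a b; ext s; cases s with
        | inl i => rfl
        | inr j => show (0:ℝ) = 0 + 0; ring
      map_smul' := by
        intro c a; ext s; cases s with
        | inl i => rfl
        | inr j => show (0:ℝ) = c * 0; ring }

noncomputable def JrL : EuclideanSpace ℝ β →L[ℝ] EuclideanSpace ℝ (α ⊕ β) :=
  LinearMap.toContinuousLinearMap
    { toFun := fun b => emb 0 b
      map_add' := by
        intro a b; ext s; cases s with
        | inl i => show (0:ℝ) = 0 + 0; ring
        | inr j => rfl
      map_smul' := by
        intro c a; ext s; cases s with
        | inl i => show (0:ℝ) = c * 0; ring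
        | inr j => rfl }

lemma emb_eq (x : EuclideanSpace ℝ α) (y : EuclideanSpace ℝ β) :
    emb x y = JlL x + JrL y := by
  ext s; cases s with
  | inl i => show x i = x i + 0; ring
  | inr j => show y j = 0 + y j; ring

lemma inner_emb (a c : EuclideanSpace ℝ α) (b d : EuclideanSpace ℝ β) :
    ⟪emb a b, emb c d⟫ = ⟪a, c⟫ + ⟪b, d⟫ := by
  simp only [PiLp.inner_apply, RCLike.inner_apply, conj_trivial]
  rw [Fintype.sum_sum_type]
  rfl

end Basics

section Graph
variable {α β : Type*} [Fintype α] [Fintype β]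

/-- pinned def from proof.lean -/
noncomputable def gmap (B : EuclideanSpace ℝ α →L[ℝ] EuclideanSpace ℝ β) :
    EuclideanSpace ℝ α →L[ℝ] EuclideanSpace ℝ (α ⊕ β) :=
  JlL + JrL.comp B

lemma gmap_apply (B : EuclideanSpace ℝ α →L[ℝ] EuclideanSpace ℝ β) (p : EuclideanSpace ℝ α) :
    gmap B p = emb p (B p) := by
  rw [emb_eq]; rfl

lemma graphSub_eq (B : EuclideanSpace ℝ α →L[ℝ] EuclideanSpace ℝ β) :
    graphSub B = LinearMap.range ((gmap B) : EuclideanSpace ℝ α →ₗ[ℝ] EuclideanSpace ℝ (α ⊕ β)) := by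
  ext w
  show (∃ p, emb p (B p) = w) ↔ ∃ p, gmap B p = w
  simp only [gmap_apply]

lemma mem_graphSub {B : EuclideanSpace ℝ α →L[ℝ] EuclideanSpace ℝ β}
    {w : EuclideanSpace ℝ (α ⊕ β)} :
    w ∈ graphSub B ↔ sndE w = B (fstE w) := by
  rw [graphSub_eq]
  constructor
  · rintro ⟨p, rfl⟩
    show sndE (gmap B p) = B (fstE (gmap B p))
    rw [gmap_apply]; simp
  · intro h
    exact ⟨fstE w, by show gmap B (fstE w) = w; rw [gmap_apply, ← h, emb_fstE_sndE]⟩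

lemma gmap_injective (B : EuclideanSpace ℝ α →L[ℝ] EuclideanSpace ℝ β) :
    Function.Injective (gmap B) := by
  intro p q h
  have : fstE (gmap B p) = fstE (gmap B q) := by rw [h]
  rwa [gmap_apply, gmap_apply, fstE_emb, fstE_emb] at this

lemma finrank_graphSub (B : EuclideanSpace ℝ α →L[ℝ] EuclideanSpace ℝ β) :
    finrank ℝ (graphSub B) = Fintype.card α := by
  rw [graphSub_eq]
  rw [LinearMap.finrank_range_of_inj (f := ((gmap B) : EuclideanSpace ℝ α →ₗ[ℝ] EuclideanSpace ℝ (α ⊕ β))) (gmap_injective B)]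
  simp [finrank_euclideanSpace]

end Graph

section Proj
variable {α β : Type*} [Fintype α] [Fintype β]

open ContinuousLinearMap in
noncomputable def TB (B : EuclideanSpace ℝ α →L[ℝ] EuclideanSpace ℝ β) :
    EuclideanSpace ℝ α →L[ℝ] EuclideanSpace ℝ α :=
  1 + (adjoint B).comp B

lemma adjoint_gmap_comp_gmap (B : EuclideanSpace ℝ α →L[ℝ] EuclideanSpace ℝ β) :
    (ContinuousLinearMap.adjoint (gmap B)).comp (gmap B) = TB B := by
  refine ContinuousLinearMap.ext fun p => ?_
  apply ext_inner_right ℝ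
  intro q
  rw [ContinuousLinearMap.comp_apply, ContinuousLinearMap.adjoint_inner_left]
  rw [gmap_apply, gmap_apply, inner_emb]
  show _ = ⟪p + ContinuousLinearMap.adjoint B (B p), q⟫
  rw [inner_add_left, ContinuousLinearMap.adjoint_inner_left]

lemma TB_inner (B : EuclideanSpace ℝ α →L[ℝ] EuclideanSpace ℝ β) (p : EuclideanSpace ℝ α) :
    ⟪TB B p, p⟫ = ‖p‖ ^ 2 + ‖B p‖ ^ 2 := by
  show ⟪(1 : EuclideanSpace ℝ α →L[ℝ] EuclideanSpace ℝ α) p + (ContinuousLinearMap.adjoint B) (B p), p⟫ = _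
  rw [inner_add_left, ContinuousLinearMap.adjoint_inner_left, ContinuousLinearMap.one_apply,
    real_inner_self_eq_norm_sq, real_inner_self_eq_norm_sq]

lemma TB_injective (B : EuclideanSpace ℝ α →L[ℝ] EuclideanSpace ℝ β) :
    Function.Injective (TB B) := by
  have h : ∀ p, TB B p = 0 → p = 0 := by
    intro p hp
    have := TB_inner B p
    rw [hp, inner_zero_left] at this
    have h1 : ‖p‖ ^ 2 ≤ 0 := by nlinarith [sq_nonneg ‖B p‖]
    have := sq_nonneg ‖p‖
    have : ‖p‖ = 0 := by nlinarith
    simpa using this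
  intro p q hpq
  have h0 : TB B (p - q) = 0 := by rw [map_sub, hpq, sub_self]
  exact sub_eq_zero.mp (h _ h0)

lemma isUnit_TB (B : EuclideanSpace ℝ α →L[ℝ] EuclideanSpace ℝ β) :
    IsUnit (TB B) := by
  have hinj : Function.Injective ((TB B) : EuclideanSpace ℝ α →ₗ[ℝ] EuclideanSpace ℝ α) :=
    TB_injective B
  have hsurj := (LinearMap.injective_iff_surjective).mp hinj
  let e : EuclideanSpace ℝ α ≃ₗ[ℝ] EuclideanSpace ℝ α :=
    LinearEquiv.ofBijective _ ⟨hinj, hsurj⟩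
  let ec := e.toContinuousLinearEquiv
  refine ⟨⟨TB B, (ec.symm : EuclideanSpace ℝ α →L[ℝ] EuclideanSpace ℝ α), ?_, ?_⟩, rfl⟩
  · refine ContinuousLinearMap.ext fun p => ?_
    exact ec.apply_symm_apply p
  · refine ContinuousLinearMap.ext fun p => ?_
    exact ec.symm_apply_apply p

lemma TB_mul_inverse (B : EuclideanSpace ℝ α →L[ℝ] EuclideanSpace ℝ β) :
    (TB B).comp (Ring.inverse (TB B)) = 1 :=
  Ring.mul_inverse_cancel _ (isUnit_TB B)

lemma projCLM_graphSub (B : EuclideanSpace ℝ α →L[ℝ] EuclideanSpace ℝ β) :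
    projCLM (graphSub B) =
      (gmap B).comp ((Ring.inverse (TB B)).comp (ContinuousLinearMap.adjoint (gmap B))) := by
  refine ContinuousLinearMap.ext fun w => ?_
  show ((graphSub B).orthogonalProjectionOnto w : EuclideanSpace ℝ (α ⊕ β)) = _
  apply Submodule.eq_starProjection_of_mem_of_inner_eq_zero
  · rw [graphSub_eq]
    exact ⟨_, rfl⟩
  · intro z hz
    rw [graphSub_eq] at hz
    obtain ⟨p, rfl⟩ := hz
    show ⟪w - (gmap B) ((Ring.inverse (TB B)) ((ContinuousLinearMap.adjoint (gmap B)) w)), gmap B p⟫ = 0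
    rw [← ContinuousLinearMap.adjoint_inner_left (gmap B)]
    rw [map_sub]
    have : (ContinuousLinearMap.adjoint (gmap B))
        ((gmap B) ((Ring.inverse (TB B)) ((ContinuousLinearMap.adjoint (gmap B)) w)))
        = (ContinuousLinearMap.adjoint (gmap B)) w := by
      have h1 : (ContinuousLinearMap.adjoint (gmap B)).comp (gmap B) = TB B :=
        adjoint_gmap_comp_gmap B
      have h2 := congrArg (fun M => M ((Ring.inverse (TB B)) ((ContinuousLinearMap.adjoint (gmap B)) w))) h1
      simp only [ContinuousLinearMap.comp_apply] at h2
      rw [h2]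
      have h3 := congrArg (fun M => M ((ContinuousLinearMap.adjoint (gmap B)) w)) (TB_mul_inverse B)
      simpa using h3
    rw [this, sub_self, inner_zero_left]

end Proj

section Cont
variable {α β : Type*} [Fintype α] [Fintype β]

lemma continuous_gmap :
    Continuous (fun B : EuclideanSpace ℝ α →L[ℝ] EuclideanSpace ℝ β => gmap B) := by
  have : Continuous (fun B : EuclideanSpace ℝ α →L[ℝ] EuclideanSpace ℝ β => (JrL (α := α) (β := β)).comp B) :=
    (ContinuousLinearMap.compL ℝ (EuclideanSpace ℝ α) (EuclideanSpace ℝ β)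
      (EuclideanSpace ℝ (α ⊕ β)) JrL).continuous
  exact continuous_const.add this

lemma continuous_comp2 {E F G : Type*} [NormedAddCommGroup E] [NormedSpace ℝ E]
    [NormedAddCommGroup F] [NormedSpace ℝ F] [NormedAddCommGroup G] [NormedSpace ℝ G]
    {X : Type*} [TopologicalSpace X] {f : X → (F →L[ℝ] G)} {g : X → (E →L[ℝ] F)}
    (hf : Continuous f) (hg : Continuous g) : Continuous (fun x => (f x).comp (g x)) :=
  (isBoundedBilinearMap_comp (𝕜 := ℝ) (E := E) (F := F) (G := G)).continuous.comp (hf.prodMk hg)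

lemma continuous_adjointE {E F : Type*} [NormedAddCommGroup E] [InnerProductSpace ℝ E]
    [NormedAddCommGroup F] [InnerProductSpace ℝ F] [CompleteSpace E] [CompleteSpace F] :
    Continuous (fun B : E →L[ℝ] F => ContinuousLinearMap.adjoint B) :=
  (ContinuousLinearMap.adjoint (𝕜 := ℝ) (E := E) (F := F)).continuous

lemma continuous_TB :
    Continuous (fun B : EuclideanSpace ℝ α →L[ℝ] EuclideanSpace ℝ β => TB B) :=
  continuous_const.add (continuous_comp2 continuous_adjointE continuous_id)

lemma continuous_inv_TB :
    Continuous (fun B : EuclideanSpace ℝ α →L[ℝ] EuclideanSpace ℝ β => Ring.inverse (TB B)) := by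
  rw [continuous_iff_continuousAt]
  intro B₀
  have hu := isUnit_TB B₀
  have h1 : ContinuousAt Ring.inverse (TB B₀) := by
    have := NormedRing.inverse_continuousAt hu.unit
    rwa [hu.unit_spec] at this
  exact h1.comp continuous_TB.continuousAt

lemma continuous_projCLM_graphSub :
    Continuous (fun B : EuclideanSpace ℝ α →L[ℝ] EuclideanSpace ℝ β => projCLM (graphSub B)) := by
  have h : Continuous (fun B : EuclideanSpace ℝ α →L[ℝ] EuclideanSpace ℝ β =>
      (gmap B).comp ((Ring.inverse (TB B)).comp (ContinuousLinearMap.adjoint (gmap B)))) :=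
    continuous_comp2 continuous_gmap
      (continuous_comp2 continuous_inv_TB (continuous_adjointE.comp continuous_gmap))
  have heq : (fun B : EuclideanSpace ℝ α →L[ℝ] EuclideanSpace ℝ β => projCLM (graphSub B)) =
      fun B => (gmap B).comp ((Ring.inverse (TB B)).comp (ContinuousLinearMap.adjoint (gmap B))) := by
    funext B; exact projCLM_graphSub B
  rw [heq]; exact h

lemma tendsto_dZ_graphSub {Ak : ℕ → EuclideanSpace ℝ α →L[ℝ] EuclideanSpace ℝ β}
    {A : EuclideanSpace ℝ α →L[ℝ] EuclideanSpace ℝ β} (h : Tendsto Ak atTop (𝓝 A)) :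
    Tendsto (fun k => dZ (graphSub (Ak k)) (graphSub A)) atTop (𝓝 0) := by
  have h1 : Tendsto (fun k => projCLM (graphSub (Ak k))) atTop (𝓝 (projCLM (graphSub A))) :=
    (continuous_projCLM_graphSub.tendsto A).comp h
  rw [tendsto_iff_norm_sub_tendsto_zero] at h1
  exact h1

lemma projCLM_mem {ι : Type*} [Fintype ι] (L : Submodule ℝ (EuclideanSpace ℝ ι))
    (w : EuclideanSpace ℝ ι) : projCLM L w ∈ L := (L.orthogonalProjectionOnto w).2

lemma projCLM_eq_self {ι : Type*} [Fintype ι] {L : Submodule ℝ (EuclideanSpace ℝ ι)}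
    {w : EuclideanSpace ℝ ι} (hw : w ∈ L) : projCLM L w = w := by
  show (L.orthogonalProjectionOnto w : EuclideanSpace ℝ ι) = w
  rw [← Submodule.starProjection_apply, Submodule.starProjection_eq_self_iff]
  exact hw

lemma projCLM_injective {ι : Type*} [Fintype ι] {L₁ L₂ : Submodule ℝ (EuclideanSpace ℝ ι)}
    (h : projCLM L₁ = projCLM L₂) : L₁ = L₂ := by
  ext w
  constructor
  · intro hw
    have := projCLM_eq_self hw
    rw [h] at this
    rw [← this]
    exact projCLM_mem L₂ w
  · intro hw
    have := projCLM_eq_self hw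
    rw [← h] at this
    rw [← this]
    exact projCLM_mem L₁ w

lemma eq_of_dZ_limits {ι : Type*} [Fintype ι] {Lk : ℕ → Submodule ℝ (EuclideanSpace ℝ ι)}
    {L L' : Submodule ℝ (EuclideanSpace ℝ ι)}
    (h : Tendsto (fun k => dZ (Lk k) L) atTop (𝓝 0))
    (h' : Tendsto (fun k => dZ (Lk k) L') atTop (𝓝 0)) : L = L' := by
  have key : ∀ k, dZ L L' ≤ dZ (Lk k) L + dZ (Lk k) L' := by
    intro k
    have : projCLM L - projCLM L' =
        (projCLM L - projCLM (Lk k)) + (projCLM (Lk k) - projCLM L') := by abel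
    calc dZ L L' = ‖projCLM L - projCLM L'‖ := rfl
      _ ≤ ‖projCLM L - projCLM (Lk k)‖ + ‖projCLM (Lk k) - projCLM L'‖ := by
          rw [this]; exact norm_add_le _ _
      _ = dZ (Lk k) L + dZ (Lk k) L' := by rw [norm_sub_rev]; rfl
  have hsum : Tendsto (fun k => dZ (Lk k) L + dZ (Lk k) L') atTop (𝓝 0) := by
    simpa using h.add h'
  have hle : dZ L L' ≤ 0 := ge_of_tendsto' hsum key
  have hge : (0:ℝ) ≤ dZ L L' := norm_nonneg _
  have : ‖projCLM L - projCLM L'‖ = 0 := le_antisymm hle hge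
  exact projCLM_injective (by rwa [norm_eq_zero, sub_eq_zero] at this)

end Cont

section TCone
variable {n m : ℕ} {Ω : Set (EuclideanSpace ℝ (Fin n))}
  {f : EuclideanSpace ℝ (Fin n) → EuclideanSpace ℝ (Fin m)}
  {x : EuclideanSpace ℝ (Fin n)} {A : EuclideanSpace ℝ (Fin n) →L[ℝ] EuclideanSpace ℝ (Fin m)}

lemma emb_add (a c : EuclideanSpace ℝ (Fin n)) (b d : EuclideanSpace ℝ (Fin m)) :
    emb a b + emb c d = emb (a + c) (b + d) := by
  ext s; cases s <;> rfl

lemma emb_smul (t : ℝ) (a : EuclideanSpace ℝ (Fin n)) (b : EuclideanSpace ℝ (Fin m)) :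
    t • emb a b = emb (t • a) (t • b) := by
  ext s; cases s <;> rfl

/-- The graph of the derivative is contained in the tangent cone. -/
lemma graphSub_subset_tangentCone (hΩ : IsOpen Ω) (hx : x ∈ Ω) (hA : HasFDerivAt f A x) :
    (graphSub A : Set (EuclideanSpace ℝ (Fin n ⊕ Fin m))) ⊆
      tangentConeAt ℝ (gphFun Ω f) (emb x (f x)) := by
  intro y hy
  rw [SetLike.mem_coe, graphSub_eq] at hy
  obtain ⟨p, rfl⟩ := hy
  set c : ℕ → ℝ := fun k => (k : ℝ) + 1 with hc
  have hcpos : ∀ k, (0:ℝ) < c k := by intro k; positivity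
  have hcnorm : Tendsto (fun k => ‖c k‖) atTop atTop := by
    have h1 : Tendsto c atTop atTop :=
      tendsto_atTop_add_const_right _ 1 tendsto_natCast_atTop_atTop
    refine h1.congr (fun k => ?_)
    rw [Real.norm_of_nonneg (hcpos k).le]
  refine mem_tangentConeAt_iff_exists_seq_norm_tendsto_atTop.mpr
    ⟨c, fun k => emb ((c k)⁻¹ • p) (f (x + (c k)⁻¹ • p) - f x), hcnorm, ?_, ?_⟩
  · have hx0 : Tendsto (fun k => x + (c k)⁻¹ • p) atTop (𝓝 x) := by
      have : Tendsto (fun k => (c k)⁻¹) atTop (𝓝 0) :=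
        tendsto_inv_atTop_zero.comp (tendsto_atTop_add_const_right _ 1 tendsto_natCast_atTop_atTop)
      have h2 : Tendsto (fun k => (c k)⁻¹ • p) atTop (𝓝 0) := by
        simpa using this.smul_const p
      simpa using tendsto_const_nhds.add h2
    filter_upwards [hx0.eventually (hΩ.mem_nhds hx)] with k hk
    refine ⟨x + (c k)⁻¹ • p, hk, ?_⟩
    rw [emb_add]
    have h5 : f x + (f (x + (c k)⁻¹ • p) - f x) = f (x + (c k)⁻¹ • p) := by abel
    rw [h5]
  · have hsecond : Tendsto (fun k => c k • (f (x + (c k)⁻¹ • p) - f x)) atTop (𝓝 (A p)) :=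
      hA.lim p hcnorm
    have key : ∀ k, c k • emb ((c k)⁻¹ • p) (f (x + (c k)⁻¹ • p) - f x) =
        JlL p + JrL (c k • (f (x + (c k)⁻¹ • p) - f x)) := by
      intro k
      rw [emb_smul, smul_inv_smul₀ (hcpos k).ne', emb_eq]
    have hlim : Tendsto (fun k => JlL p + JrL (c k • (f (x + (c k)⁻¹ • p) - f x))) atTop
        (𝓝 (JlL p + JrL (A p))) :=
      tendsto_const_nhds.add ((JrL.continuous.tendsto _).comp hsecond)
    have : (gmap A) p = JlL p + JrL (A p) := by rw [gmap_apply, emb_eq]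
    rw [show ((gmap A : EuclideanSpace ℝ (Fin n) →ₗ[ℝ] EuclideanSpace ℝ (Fin n ⊕ Fin m)) p : EuclideanSpace ℝ (Fin n ⊕ Fin m)) = gmap A p from rfl, this]
    exact hlim.congr (fun k => (key k).symm)

/-- The tangent cone is contained in the graph of the derivative. -/
lemma tangentCone_subset_graphSub (hΩ : IsOpen Ω) (hx : x ∈ Ω) (hA : HasFDerivAt f A x) :
    tangentConeAt ℝ (gphFun Ω f) (emb x (f x)) ⊆
      (graphSub A : Set (EuclideanSpace ℝ (Fin n ⊕ Fin m))) := by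
  rintro y hy
  obtain ⟨c, d, hc, hd, hcd⟩ := mem_tangentConeAt_iff_exists_seq_norm_tendsto_atTop.mp hy
  set p : ℕ → EuclideanSpace ℝ (Fin n) := fun k => fstE (d k) with hp
  set q : ℕ → EuclideanSpace ℝ (Fin m) := fun k => sndE (d k) with hq
  have hd0 : Tendsto d atTop (𝓝 0) := tangentConeAt.lim_zero atTop hc hcd
  have hp0 : Tendsto p atTop (𝓝 0) := by
    have := (fstL.continuous.tendsto (0 : EuclideanSpace ℝ (Fin n ⊕ Fin m))).comp hd0
    simpa [map_zero, Function.comp_def] using this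
  have hev : ∀ᶠ k in atTop, x + p k ∈ Ω ∧ q k = f (x + p k) - f x := by
    filter_upwards [hd] with k hk
    obtain ⟨u, hu, huw⟩ := hk
    have h1 : x + p k = u := by
      have := congrArg fstE huw
      rw [fstE_emb] at this
      rw [← this]; rfl
    have h2 : f x + q k = f u := by
      have := congrArg sndE huw
      rw [sndE_emb] at this
      rw [← this]; rfl
    refine ⟨h1 ▸ hu, ?_⟩
    rw [h1, ← h2]
    abel
  have hcp : Tendsto (fun k => c k • p k) atTop (𝓝 (fstE y)) := by
    have := (fstL.continuous.tendsto y).comp hcd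
    exact this.congr (fun k => rfl)
  have hcq : Tendsto (fun k => c k • q k) atTop (𝓝 (sndE y)) := by
    have := (sndL.continuous.tendsto y).comp hcd
    exact this.congr (fun k => rfl)
  -- little-o machinery
  set r : ℕ → EuclideanSpace ℝ (Fin m) := fun k => f (x + p k) - f x - A (p k) with hr
  have hro : r =o[atTop] p := by
    have h1 := hasFDerivAt_iff_isLittleO_nhds_zero.mp hA
    exact h1.comp_tendsto hp0
  have hcr : Tendsto (fun k => c k • r k) atTop (𝓝 0) := by
    have h1 : (fun k => c k • r k) =o[atTop] (fun k => c k • p k) :=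
      Asymptotics.IsBigO.smul_isLittleO (Asymptotics.isBigO_refl c atTop) hro
    have h2 : (fun k => c k • p k) =O[atTop] (fun _ => (1:ℝ)) :=
      hcp.isBigO_one ℝ
    have h3 := h1.trans_isBigO h2
    exact (Asymptotics.isLittleO_one_iff ℝ).mp h3
  have halt : Tendsto (fun k => A (c k • p k) + c k • r k) atTop (𝓝 (A (fstE y))) := by
    have h4 : Tendsto (fun k => A (c k • p k)) atTop (𝓝 (A (fstE y))) :=
      (A.continuous.tendsto _).comp hcp
    simpa using h4.add hcr
  have heq : ∀ᶠ k in atTop, c k • q k = A (c k • p k) + c k • r k := by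
    filter_upwards [hev] with k hk
    rw [hk.2, hr]
    rw [map_smul, smul_sub, smul_sub, smul_sub]
    abel
  have : Tendsto (fun k => c k • q k) atTop (𝓝 (A (fstE y))) :=
    halt.congr' (by filter_upwards [heq] with k hk; rw [hk])
  have hfin : sndE y = A (fstE y) := tendsto_nhds_unique hcq this
  rw [SetLike.mem_coe, mem_graphSub]
  exact hfin

end TCone

section Part1
variable {n m : ℕ} {Ω : Set (EuclideanSpace ℝ (Fin n))}
  {f : EuclideanSpace ℝ (Fin n) → EuclideanSpace ℝ (Fin m)}
  {x : EuclideanSpace ℝ (Fin n)}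

lemma tangentCone_eq_graphSub (hΩ : IsOpen Ω) (hx : x ∈ Ω) (hd : DifferentiableAt ℝ f x) :
    ((graphSub (fderiv ℝ f x) : Submodule ℝ (EuclideanSpace ℝ (Fin n ⊕ Fin m))) :
      Set (EuclideanSpace ℝ (Fin n ⊕ Fin m))) = tangentConeAt ℝ (gphFun Ω f) (emb x (f x)) :=
  le_antisymm (graphSub_subset_tangentCone hΩ hx hd.hasFDerivAt)
    (tangentCone_subset_graphSub hΩ hx hd.hasFDerivAt)

lemma tendsto_emb_graph {xk : ℕ → EuclideanSpace ℝ (Fin n)} (hxk : Tendsto xk atTop (𝓝 x))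
    (hfc : ContinuousAt f x) :
    Tendsto (fun k => emb (xk k) (f (xk k))) atTop (𝓝 (emb x (f x))) := by
  have h1 : Tendsto (fun k => f (xk k)) atTop (𝓝 (f x)) := hfc.tendsto.comp hxk
  have h2 : Tendsto (fun k => JlL (xk k) + JrL (f (xk k))) atTop (𝓝 (JlL x + JrL (f x))) :=
    ((JlL.continuous.tendsto _).comp hxk).add ((JrL.continuous.tendsto _).comp h1)
  simpa [← emb_eq] using h2

lemma graphSub_mem_scderiv (hΩ : IsOpen Ω) (hf : ContinuousOn f Ω) (hx : x ∈ Ω)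
    {A : EuclideanSpace ℝ (Fin n) →L[ℝ] EuclideanSpace ℝ (Fin m)} (hA : A ∈ BJac Ω f x) :
    graphSub A ∈ SCderivFun Ω f x := by
  obtain ⟨xk, hk, hxk, hAk⟩ := hA
  constructor
  · rw [finrank_graphSub A, Fintype.card_fin]
  refine ⟨fun k => emb (xk k) (f (xk k)), fun k => graphSub (fderiv ℝ f (xk k)),
    fun k => ?_, ?_, ?_⟩
  · refine ⟨⟨xk k, (hk k).1, rfl⟩, ?_, tangentCone_eq_graphSub hΩ (hk k).1 (hk k).2⟩
    rw [finrank_graphSub _, Fintype.card_fin]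
  · exact tendsto_emb_graph hxk (hf.continuousAt (hΩ.mem_nhds hx))
  · exact tendsto_dZ_graphSub hAk

end Part1

section Part2
variable {α β : Type*} [Fintype α] [Fintype β]

lemma swapNeg_eq (w : EuclideanSpace ℝ (β ⊕ α)) :
    swapNeg α β w = emb (sndE w) (-(fstE w)) := by
  ext s; cases s <;> rfl

lemma adjSub_graphSub (A : EuclideanSpace ℝ α →L[ℝ] EuclideanSpace ℝ β) :
    adjSub (graphSub A) = graphSub (ContinuousLinearMap.adjoint A) := by
  ext w
  rw [adjSub, Submodule.mem_comap, Submodule.mem_orthogonal, mem_graphSub]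
  constructor
  · intro h
    have key : ∀ p : EuclideanSpace ℝ α,
        ⟪p, sndE w - ContinuousLinearMap.adjoint A (fstE w)⟫ = 0 := by
      intro p
      have hmem : gmap A p ∈ graphSub A := by rw [graphSub_eq]; exact ⟨p, rfl⟩
      have h0 := h _ hmem
      rw [swapNeg_eq, gmap_apply, inner_emb] at h0
      rw [inner_sub_right]
      rw [ContinuousLinearMap.adjoint_inner_right A]
      have : ⟪A p, -(fstE w)⟫ = -⟪A p, fstE w⟫ := inner_neg_right _ _
      linarith [h0, this]
    have := key (sndE w - ContinuousLinearMap.adjoint A (fstE w))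
    rw [inner_self_eq_zero] at this
    exact sub_eq_zero.mp this
  · intro h u hu
    rw [graphSub_eq] at hu
    obtain ⟨p, rfl⟩ := hu
    show ⟪gmap A p, swapNeg α β w⟫ = 0
    rw [swapNeg_eq, gmap_apply, inner_emb, h, inner_neg_right,
      ContinuousLinearMap.adjoint_inner_right A]
    ring
end Part2

section Lip1
variable {n m : ℕ} {Ω : Set (EuclideanSpace ℝ (Fin n))}
  {f : EuclideanSpace ℝ (Fin n) → EuclideanSpace ℝ (Fin m)}
  {x : EuclideanSpace ℝ (Fin n)}

lemma norm_emb_le (a : EuclideanSpace ℝ (Fin n)) (b : EuclideanSpace ℝ (Fin m)) :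
    ‖emb a b‖ ≤ ‖a‖ + ‖b‖ := by
  have h : ‖emb a b‖ ^ 2 ≤ (‖a‖ + ‖b‖) ^ 2 := by
    rw [← real_inner_self_eq_norm_sq, inner_emb, real_inner_self_eq_norm_sq,
      real_inner_self_eq_norm_sq]
    nlinarith [norm_nonneg a, norm_nonneg b]
  nlinarith [norm_nonneg (emb a b), norm_nonneg a, norm_nonneg b]

/-- Extract the graph structure from membership of perturbed points in the graph. -/
lemma gph_seq {d : ℕ → EuclideanSpace ℝ (Fin n ⊕ Fin m)}
    (hd : ∀ᶠ k in atTop, emb x (f x) + d k ∈ gphFun Ω f) :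
    ∀ᶠ k in atTop, x + fstE (d k) ∈ Ω ∧ sndE (d k) = f (x + fstE (d k)) - f x := by
  filter_upwards [hd] with k hk
  obtain ⟨u, hu, huw⟩ := hk
  have h1 : x + fstE (d k) = u := by
    have := congrArg fstE huw
    rw [fstE_emb] at this
    rw [← this]; rfl
  have h2 : f x + sndE (d k) = f u := by
    have := congrArg sndE huw
    rw [sndE_emb] at this
    rw [← this]; rfl
  refine ⟨h1 ▸ hu, ?_⟩
  rw [h1, ← h2]
  abel

/-- Tangent vectors to the graph of a locally Lipschitz function satisfy `‖q‖ ≤ K‖p‖`. -/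
lemma tangentCone_lipschitz_bound {V : Set (EuclideanSpace ℝ (Fin n))} (hV : V ∈ 𝓝 x)
    {K : NNReal} (hlip : LipschitzOnWith K f V)
    {w : EuclideanSpace ℝ (Fin n ⊕ Fin m)}
    (hw : w ∈ tangentConeAt ℝ (gphFun Ω f) (emb x (f x))) :
    ‖sndE w‖ ≤ (K : ℝ) * ‖fstE w‖ := by
  obtain ⟨c, d, hc, hd, hcd⟩ := mem_tangentConeAt_iff_exists_seq_norm_tendsto_atTop.mp hw
  have hxV : x ∈ V := mem_of_mem_nhds hV
  have hd0 : Tendsto d atTop (𝓝 0) := tangentConeAt.lim_zero atTop hc hcd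
  have hp0 : Tendsto (fun k => x + fstE (d k)) atTop (𝓝 x) := by
    have h1 := (fstL.continuous.tendsto (0 : EuclideanSpace ℝ (Fin n ⊕ Fin m))).comp hd0
    have h2 : Tendsto (fun k => fstE (d k)) atTop (𝓝 0) := by simpa [map_zero, Function.comp_def] using h1
    simpa using tendsto_const_nhds.add h2
  have hcp : Tendsto (fun k => ‖c k • fstE (d k)‖) atTop (𝓝 ‖fstE w‖) :=
    (continuous_norm.tendsto _).comp (((fstL.continuous.tendsto w).comp hcd).congr fun k => rfl)
  have hcq : Tendsto (fun k => ‖c k • sndE (d k)‖) atTop (𝓝 ‖sndE w‖) :=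
    (continuous_norm.tendsto _).comp (((sndL.continuous.tendsto w).comp hcd).congr fun k => rfl)
  have hev : ∀ᶠ k in atTop, ‖c k • sndE (d k)‖ ≤ (K : ℝ) * ‖c k • fstE (d k)‖ := by
    filter_upwards [gph_seq hd, hp0.eventually hV] with k hk hkV
    rw [hk.2]
    have hb : ‖f (x + fstE (d k)) - f x‖ ≤ (K : ℝ) * ‖fstE (d k)‖ := by
      have := hlip.dist_le_mul _ hkV _ hxV
      rw [dist_eq_norm] at this
      simpa using this
    rw [norm_smul, norm_smul]
    calc ‖c k‖ * ‖f (x + fstE (d k)) - f x‖ ≤ ‖c k‖ * ((K : ℝ) * ‖fstE (d k)‖) :=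
          mul_le_mul_of_nonneg_left hb (norm_nonneg _)
      _ = (K : ℝ) * (‖c k‖ * ‖fstE (d k)‖) := by ring
  exact le_of_tendsto_of_tendsto hcq (hcp.const_mul _) hev

/-- An `n`-dimensional subspace with no vertical vectors is the graph of a linear map. -/
lemma exists_graph_of_no_vertical (L : Submodule ℝ (EuclideanSpace ℝ (Fin n ⊕ Fin m)))
    (hrank : finrank ℝ L = n)
    (hvert : ∀ w ∈ L, fstE w = 0 → w = 0) :
    ∃ B : EuclideanSpace ℝ (Fin n) →L[ℝ] EuclideanSpace ℝ (Fin m), L = graphSub B := by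
  set F : L →ₗ[ℝ] EuclideanSpace ℝ (Fin n) := (fstL.toLinearMap).comp L.subtype with hF
  have hinj : Function.Injective F := by
    intro u v huv
    have h1 : fstE ((u : EuclideanSpace ℝ (Fin n ⊕ Fin m)) - (v : EuclideanSpace ℝ (Fin n ⊕ Fin m))) = 0 := by
      have h0 : fstE (u : EuclideanSpace ℝ (Fin n ⊕ Fin m)) = fstE (v : EuclideanSpace ℝ (Fin n ⊕ Fin m)) := huv
      rw [show fstE ((u : EuclideanSpace ℝ (Fin n ⊕ Fin m)) - (v : EuclideanSpace ℝ (Fin n ⊕ Fin m))) = fstE (u : EuclideanSpace ℝ (Fin n ⊕ Fin m)) - fstE (v : EuclideanSpace ℝ (Fin n ⊕ Fin m)) from rfl, h0, sub_self]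
    have h2 := hvert _ (Submodule.sub_mem L u.2 v.2) h1
    exact Subtype.ext (sub_eq_zero.mp h2)
  have hrk : finrank ℝ L = finrank ℝ (EuclideanSpace ℝ (Fin n)) := by
    rw [hrank]; simp [finrank_euclideanSpace]
  have hsurj : Function.Surjective F :=
    (LinearMap.injective_iff_surjective_of_finrank_eq_finrank hrk).mp hinj
  set e : L ≃ₗ[ℝ] EuclideanSpace ℝ (Fin n) := LinearEquiv.ofBijective F ⟨hinj, hsurj⟩ with he
  set Blin : EuclideanSpace ℝ (Fin n) →ₗ[ℝ] EuclideanSpace ℝ (Fin m) :=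
    (sndL.toLinearMap).comp (L.subtype.comp (e.symm.toLinearMap)) with hB
  refine ⟨LinearMap.toContinuousLinearMap Blin, ?_⟩
  have hBapp : ∀ p, LinearMap.toContinuousLinearMap Blin p = sndE ((e.symm p : L) : EuclideanSpace ℝ (Fin n ⊕ Fin m)) := fun p => rfl
  have hfstsymm : ∀ p, fstE ((e.symm p : L) : EuclideanSpace ℝ (Fin n ⊕ Fin m)) = p := by
    intro p
    have : F (e.symm p) = p := e.apply_symm_apply p
    exact this
  ext w
  rw [mem_graphSub]
  constructor
  · intro hw
    have hsy : e.symm (fstE w) = ⟨w, hw⟩ := by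
      apply e.injective
      rw [e.apply_symm_apply]
      rfl
    rw [hBapp, hsy]
  · intro hw
    have h3 : fstE ((e.symm (fstE w) : L) : EuclideanSpace ℝ (Fin n ⊕ Fin m)) = fstE w :=
      hfstsymm _
    have h4 : sndE ((e.symm (fstE w) : L) : EuclideanSpace ℝ (Fin n ⊕ Fin m)) = sndE w := by
      rw [← hBapp, ← hw]
    have : w = ((e.symm (fstE w) : L) : EuclideanSpace ℝ (Fin n ⊕ Fin m)) := by
      calc w = emb (fstE w) (sndE w) := (emb_fstE_sndE w).symm
        _ = emb (fstE ((e.symm (fstE w) : L) : EuclideanSpace ℝ (Fin n ⊕ Fin m)))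
              (sndE ((e.symm (fstE w) : L) : EuclideanSpace ℝ (Fin n ⊕ Fin m))) := by
            rw [h3, h4]
        _ = _ := emb_fstE_sndE _
    rw [this]
    exact (e.symm (fstE w)).2

end Lip1

section Lip2
variable {n m : ℕ} {Ω : Set (EuclideanSpace ℝ (Fin n))}
  {f : EuclideanSpace ℝ (Fin n) → EuclideanSpace ℝ (Fin m)}
  {x : EuclideanSpace ℝ (Fin n)}

lemma fstE_smul' (c : ℝ) (u : EuclideanSpace ℝ (Fin n ⊕ Fin m)) :
    fstE (c • u) = c • fstE u := rfl
lemma sndE_smul' (c : ℝ) (u : EuclideanSpace ℝ (Fin n ⊕ Fin m)) :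
    sndE (c • u) = c • sndE u := rfl

/-- If `f` is Lipschitz near `x` and the tangent cone to its graph at `x` is the graph of a
continuous linear map `B`, then `f` is differentiable at `x` with derivative `B`. -/
lemma hasFDerivAt_of_tangentCone {V : Set (EuclideanSpace ℝ (Fin n))}
    (hV : V ∈ 𝓝 x) (hVΩ : V ⊆ Ω) {K : NNReal} (hlip : LipschitzOnWith K f V)
    {B : EuclideanSpace ℝ (Fin n) →L[ℝ] EuclideanSpace ℝ (Fin m)}
    (ht : tangentConeAt ℝ (gphFun Ω f) (emb x (f x)) =
      (graphSub B : Set (EuclideanSpace ℝ (Fin n ⊕ Fin m)))) :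
    HasFDerivAt f B x := by
  rw [HasFDerivAt, hasFDerivAtFilter_iff_isLittleO, Asymptotics.isLittleO_iff]
  by_contra hcon
  push_neg at hcon
  obtain ⟨ε, hε, hfreq⟩ := hcon
  rw [Filter.prod_pure, Filter.frequently_map] at hfreq
  have hsel : ∀ j : ℕ, ∃ y, y ∈ V ∧ ‖y - x‖ < 1 / (j + 1) ∧
      ε * ‖y - x‖ < ‖f y - f x - B (y - x)‖ := by
    intro j
    have hU : V ∩ Metric.ball x (1 / (j + 1)) ∈ 𝓝 x :=
      Filter.inter_mem hV (Metric.ball_mem_nhds x (by positivity))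
    obtain ⟨y, hy1, hy2⟩ := (hfreq.and_eventually (eventually_mem_set.mpr hU)).exists
    exact ⟨y, hy2.1, by simpa [dist_eq_norm] using hy2.2, hy1⟩
  choose y hyV hyb hye using hsel
  have htj : ∀ j, 0 < ‖y j - x‖ := by
    intro j
    rcases eq_or_ne (y j) x with h | h
    · exfalso
      have := hye j
      rw [h] at this
      simp at this
    · rw [norm_pos_iff, sub_ne_zero]; exact h
  set c : ℕ → ℝ := fun j => ‖y j - x‖⁻¹ with hc
  set d : ℕ → EuclideanSpace ℝ (Fin n ⊕ Fin m) :=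
    fun j => emb (y j - x) (f (y j) - f x) with hd
  have hcpos : ∀ j, 0 < c j := fun j => inv_pos.mpr (htj j)
  have hct : ∀ j, c j * ‖y j - x‖ = 1 := fun j => inv_mul_cancel₀ (htj j).ne'
  have husmul : ∀ j, c j • d j = emb (c j • (y j - x)) (c j • (f (y j) - f x)) :=
    fun j => emb_smul _ _ _
  have hbound : ∀ j, ‖c j • d j‖ ≤ 1 + K := by
    intro j
    rw [husmul j]
    refine le_trans (norm_emb_le _ _) ?_
    have h1 : ‖c j • (y j - x)‖ = 1 := by
      rw [norm_smul, Real.norm_of_nonneg (hcpos j).le, hct j]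
    have h2 : ‖c j • (f (y j) - f x)‖ ≤ (K : ℝ) := by
      rw [norm_smul, Real.norm_of_nonneg (hcpos j).le]
      have hlipb : ‖f (y j) - f x‖ ≤ (K : ℝ) * ‖y j - x‖ := by
        have := hlip.dist_le_mul _ (hyV j) _ (mem_of_mem_nhds hV)
        rw [dist_eq_norm, dist_eq_norm] at this
        exact this
      calc c j * ‖f (y j) - f x‖ ≤ c j * ((K : ℝ) * ‖y j - x‖) :=
            mul_le_mul_of_nonneg_left hlipb (hcpos j).le
        _ = (K : ℝ) * (c j * ‖y j - x‖) := by ring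
        _ = (K : ℝ) := by rw [hct j, mul_one]
    linarith
  obtain ⟨z, -, φ, hφ, hz⟩ := tendsto_subseq_of_bounded
    (Metric.isBounded_closedBall (x := (0 : EuclideanSpace ℝ (Fin n ⊕ Fin m))) (r := 1 + K))
    (x := fun j => c j • d j)
    (fun j => by simpa [Metric.mem_closedBall, dist_zero_right] using hbound j)
  have hclow : ∀ j : ℕ, (j : ℝ) + 1 ≤ ‖c j‖ := by
    intro j
    rw [Real.norm_of_nonneg (hcpos j).le]
    have h3 : ‖y j - x‖ * ((j : ℝ) + 1) < 1 := by
      have := hyb j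
      have hj : (0:ℝ) < (j:ℝ) + 1 := by positivity
      calc ‖y j - x‖ * ((j : ℝ) + 1) < (1 / ((j:ℝ) + 1)) * ((j : ℝ) + 1) := by
            exact mul_lt_mul_of_pos_right this hj
        _ = 1 := by field_simp
    nlinarith [hct j, htj j, hcpos j]
  have hcnorm : Tendsto (fun j => ‖c (φ j)‖) atTop atTop := by
    have h4 : Tendsto (fun j : ℕ => (j : ℝ) + 1) atTop atTop :=
      tendsto_atTop_add_const_right _ 1 tendsto_natCast_atTop_atTop
    have h5 : Tendsto (fun j => ‖c j‖) atTop atTop :=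
      tendsto_atTop_mono hclow h4
    exact h5.comp hφ.tendsto_atTop
  have hmem : ∀ j, emb x (f x) + d j ∈ gphFun Ω f := by
    intro j
    rw [hd]
    have h6 : emb x (f x) + emb (y j - x) (f (y j) - f x) = emb (y j) (f (y j)) := by
      rw [emb_add]
      have e1 : x + (y j - x) = y j := by abel
      have e2 : f x + (f (y j) - f x) = f (y j) := by abel
      rw [e1, e2]
    rw [h6]
    exact ⟨y j, hVΩ (hyV j), rfl⟩
  have hzcone : z ∈ tangentConeAt ℝ (gphFun Ω f) (emb x (f x)) :=
    mem_tangentConeAt_iff_exists_seq_norm_tendsto_atTop.mpr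
      ⟨c ∘ φ, d ∘ φ, hcnorm, Eventually.of_forall (fun j => hmem (φ j)), hz⟩
  rw [ht, SetLike.mem_coe, mem_graphSub] at hzcone
  have hlower : ∀ j, ε ≤ ‖sndE (c j • d j) - B (fstE (c j • d j))‖ := by
    intro j
    have h7 : sndE (c j • d j) - B (fstE (c j • d j)) =
        c j • (f (y j) - f x - B (y j - x)) := by
      rw [husmul j, fstE_emb, sndE_emb, map_smul, smul_sub, smul_sub, smul_sub]
    rw [h7, norm_smul, Real.norm_of_nonneg (hcpos j).le]
    have h8 := hye j
    nlinarith [hct j, hcpos j, htj j]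
  have hcontg : Tendsto (fun j => ‖sndE ((c (φ j)) • d (φ j)) - B (fstE ((c (φ j)) • d (φ j)))‖)
      atTop (𝓝 ‖sndE z - B (fstE z)‖) := by
    have hgc : Continuous (fun w : EuclideanSpace ℝ (Fin n ⊕ Fin m) => ‖sndL w - B (fstL w)‖) :=
      (sndL.continuous.sub (B.continuous.comp fstL.continuous)).norm
    exact (hgc.tendsto z).comp hz
  have hfinal : ε ≤ ‖sndE z - B (fstE z)‖ :=
    ge_of_tendsto' hcontg (fun j => hlower (φ j))
  rw [hzcone, sub_self, norm_zero] at hfinal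
  exact absurd hfinal (not_le.mpr hε)

end Lip2

section Lip3
variable {n m : ℕ} {Ω : Set (EuclideanSpace ℝ (Fin n))}
  {f : EuclideanSpace ℝ (Fin n) → EuclideanSpace ℝ (Fin m)}
  {x : EuclideanSpace ℝ (Fin n)}

lemma emb_zero : emb (0 : EuclideanSpace ℝ (Fin n)) (0 : EuclideanSpace ℝ (Fin m)) = 0 := by
  ext s; cases s <;> rfl

/-- Rademacher + Bolzano–Weierstrass: the B-Jacobian of a locally Lipschitz function
is nonempty. -/
lemma bjac_nonempty {V : Set (EuclideanSpace ℝ (Fin n))} (hV : V ∈ 𝓝 x) (hVΩ : V ⊆ Ω)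
    {K : NNReal} (hlip : LipschitzOnWith K f V) : (BJac Ω f x).Nonempty := by
  set W := interior V with hWdef
  have hWo : IsOpen W := isOpen_interior
  have hxW : x ∈ W := mem_interior_iff_mem_nhds.mpr hV
  have hlipW : LipschitzOnWith K f W := hlip.mono interior_subset
  have hae := hlipW.ae_differentiableWithinAt_of_mem (μ := MeasureTheory.volume)
  have hsel : ∀ j : ℕ, ∃ yj, yj ∈ W ∧ dist yj x < 1 / (j + 1) ∧ DifferentiableAt ℝ f yj := by
    intro j
    obtain ⟨δ, hδpos, hball⟩ := Metric.isOpen_iff.mp hWo x hxW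
    set r := min δ (1 / ((j : ℝ) + 1)) with hr
    have hrpos : 0 < r := lt_min hδpos (by positivity)
    have hpos : 0 < MeasureTheory.volume (Metric.ball x r) :=
      Metric.measure_ball_pos _ _ hrpos
    by_contra hcon
    push_neg at hcon
    have hbad : MeasureTheory.volume {y : EuclideanSpace ℝ (Fin n) |
        ¬ (y ∈ W → DifferentiableWithinAt ℝ f W y)} = 0 := MeasureTheory.ae_iff.mp hae
    have hsub : Metric.ball x r ⊆ {y : EuclideanSpace ℝ (Fin n) |
        ¬ (y ∈ W → DifferentiableWithinAt ℝ f W y)} := by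
      intro y hy
      have hyW : y ∈ W := hball (Metric.ball_subset_ball (min_le_left _ _) hy)
      have hyd : dist y x < 1 / ((j : ℝ) + 1) :=
        lt_of_lt_of_le (Metric.mem_ball.mp hy) (min_le_right _ _)
      intro himp
      exact hcon y hyW hyd ((himp hyW).differentiableAt (hWo.mem_nhds hyW))
    have := MeasureTheory.measure_mono (μ := MeasureTheory.volume) hsub
    rw [hbad] at this
    exact absurd (le_antisymm this zero_le) hpos.ne'
  choose y hyW hyd hydiff using hsel
  have hfb : ∀ j, fderiv ℝ f (y j) ∈ Metric.closedBall
      (0 : EuclideanSpace ℝ (Fin n) →L[ℝ] EuclideanSpace ℝ (Fin m)) (K : ℝ) := by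
    intro j
    rw [Metric.mem_closedBall, dist_zero_right]
    exact norm_fderiv_le_of_lipschitzOn ℝ (hWo.mem_nhds (hyW j)) hlipW
  obtain ⟨A, -, ψ, hψ, hA⟩ := tendsto_subseq_of_bounded
    (Metric.isBounded_closedBall
      (x := (0 : EuclideanSpace ℝ (Fin n) →L[ℝ] EuclideanSpace ℝ (Fin m))) (r := (K : ℝ)))
    hfb
  have hyx : Tendsto y atTop (𝓝 x) := by
    rw [tendsto_iff_dist_tendsto_zero]
    refine squeeze_zero (fun j => dist_nonneg) (fun j => (hyd j).le) ?_
    exact tendsto_one_div_add_atTop_nhds_zero_nat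
  refine ⟨A, fun j => y (ψ j), fun j => ⟨hVΩ (interior_subset (hyW (ψ j))), hydiff (ψ j)⟩,
    hyx.comp hψ.tendsto_atTop, hA⟩

end Lip3

section Lip4
variable {n m : ℕ} {Ω : Set (EuclideanSpace ℝ (Fin n))}
  {f : EuclideanSpace ℝ (Fin n) → EuclideanSpace ℝ (Fin m)}
  {x : EuclideanSpace ℝ (Fin n)}

/-- For locally Lipschitz `f`, every element of the SC derivative is the graph of some
element of the B-Jacobian. -/
lemma scderiv_subset_bjac (hx : x ∈ Ω) {V : Set (EuclideanSpace ℝ (Fin n))}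
    (hV : V ∈ 𝓝 x) (hVΩ : V ⊆ Ω) {K : NNReal} (hlip : LipschitzOnWith K f V) :
    SCderivFun Ω f x ⊆ {L | ∃ A ∈ BJac Ω f x, L = graphSub A} := by
  intro L hL
  obtain ⟨hrank, wk, Lk, hk, hwk, hdZ⟩ := hL
  set W := interior V with hWdef
  have hWo : IsOpen W := isOpen_interior
  have hxW : x ∈ W := mem_interior_iff_mem_nhds.mpr hV
  have hlipW : LipschitzOnWith K f W := hlip.mono interior_subset
  have hWΩ : W ⊆ Ω := subset_trans interior_subset hVΩ
  set xk : ℕ → EuclideanSpace ℝ (Fin n) := fun k => fstE (wk k) with hxkdef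
  have hxkΩ : ∀ k, xk k ∈ Ω ∧ wk k = emb (xk k) (f (xk k)) := by
    intro k
    obtain ⟨u, hu, huw⟩ := (hk k).1
    have h1 : xk k = u := by
      have := congrArg fstE huw
      rw [fstE_emb] at this
      exact this
    exact ⟨h1 ▸ hu, by rw [huw, h1]⟩
  have hxk : Tendsto xk atTop (𝓝 x) := by
    have h2 := (fstL.continuous.tendsto (emb x (f x))).comp hwk
    simpa [Function.comp_def] using h2
  obtain ⟨N, hN⟩ := eventually_atTop.mp (hxk.eventually (hWo.mem_nhds hxW))
  have key : ∀ k, xk k ∈ W →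
      ∃ B : EuclideanSpace ℝ (Fin n) →L[ℝ] EuclideanSpace ℝ (Fin m),
        (Lk k = graphSub B ∧ HasFDerivAt f B (xk k)) ∧
          B ∈ Metric.closedBall (0 : EuclideanSpace ℝ (Fin n) →L[ℝ] EuclideanSpace ℝ (Fin m))
            (K : ℝ) := by
    intro k hkW
    have hVk : W ∈ 𝓝 (xk k) := hWo.mem_nhds hkW
    have hcone : (Lk k : Set (EuclideanSpace ℝ (Fin n ⊕ Fin m))) =
        tangentConeAt ℝ (gphFun Ω f) (emb (xk k) (f (xk k))) := by
      have h3 := (hk k).2.2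
      rwa [(hxkΩ k).2] at h3
    have hvert : ∀ w ∈ Lk k, fstE w = 0 → w = 0 := by
      intro w hwL hw0
      have hwcone : w ∈ tangentConeAt ℝ (gphFun Ω f) (emb (xk k) (f (xk k))) := by
        rw [← hcone]; exact hwL
      have h4 := tangentCone_lipschitz_bound hVk hlipW hwcone
      rw [hw0, norm_zero, mul_zero] at h4
      have h5 : sndE w = 0 := norm_le_zero_iff.mp h4
      rw [← emb_fstE_sndE w, hw0, h5, emb_zero]
    obtain ⟨B, hB⟩ := exists_graph_of_no_vertical (Lk k) (hk k).2.1 hvert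
    have hder : HasFDerivAt f B (xk k) :=
      hasFDerivAt_of_tangentCone hVk hWΩ hlipW (by rw [← hcone, hB])
    refine ⟨B, ⟨hB, hder⟩, ?_⟩
    rw [Metric.mem_closedBall, dist_zero_right]
    exact hder.le_of_lipschitzOn hVk hlipW
  choose Bf hBf hBnorm using key
  set Bk : ℕ → EuclideanSpace ℝ (Fin n) →L[ℝ] EuclideanSpace ℝ (Fin m) :=
    fun j => Bf (N + j) (hN _ (Nat.le_add_right N j)) with hBkdef
  obtain ⟨A, -, ψ, hψ, hA⟩ := tendsto_subseq_of_bounded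
    (Metric.isBounded_closedBall
      (x := (0 : EuclideanSpace ℝ (Fin n) →L[ℝ] EuclideanSpace ℝ (Fin m))) (r := (K : ℝ)))
    (fun j => hBnorm (N + j) (hN _ (Nat.le_add_right N j)))
  set θ : ℕ → ℕ := fun j => N + ψ j with hθdef
  have hθ : Tendsto θ atTop atTop := by
    refine tendsto_atTop_mono (fun j => ?_) tendsto_id
    calc (id j : ℕ) = j := rfl
      _ ≤ ψ j := hψ.le_apply
      _ ≤ N + ψ j := Nat.le_add_left _ _
  have hmemθ : ∀ j, xk (θ j) ∈ W := fun j => hN _ (Nat.le_add_right N (ψ j))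
  have hABJac : A ∈ BJac Ω f x := by
    refine ⟨fun j => xk (θ j), fun j => ⟨(hxkΩ (θ j)).1, ?_⟩, hxk.comp hθ, ?_⟩
    · exact ((hBf (θ j) (hmemθ j)).2).differentiableAt
    · have h6 : ∀ j, fderiv ℝ f (xk (θ j)) = Bk (ψ j) := by
        intro j
        exact ((hBf (θ j) (hmemθ j)).2).fderiv
      have h7 : Tendsto (fun j => Bk (ψ j)) atTop (𝓝 A) := hA
      exact h7.congr (fun j => (h6 j).symm)
  refine ⟨A, hABJac, ?_⟩
  have h8 : Tendsto (fun j => dZ (Lk (θ j)) L) atTop (𝓝 0) := hdZ.comp hθ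
  have h9 : Tendsto (fun j => dZ (Lk (θ j)) (graphSub A)) atTop (𝓝 0) := by
    have h10 : Tendsto (fun j => dZ (graphSub (Bk (ψ j))) (graphSub A)) atTop (𝓝 0) :=
      tendsto_dZ_graphSub hA
    refine h10.congr (fun j => ?_)
    rw [← (hBf (θ j) (hmemθ j)).1]
  exact eq_of_dZ_limits h8 h9

end Lip4

/-- Lemma 3.5 (Gfrerer–Outrata 2023): for continuous `f`, `𝒮f(x) ⊇ {rge(I,A) | A ∈ ∇̄f(x)}` and
`𝒮*f(x) ⊇ {rge(I,Aᵀ) | A ∈ ∇̄f(x)}`; for `f` Lipschitz near `x` these are equalities and `f`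
has the SCD property at all points of `Ω` sufficiently close to `x`. -/
theorem scderiv_single_valued {n m : ℕ}
    (Ω : Set (EuclideanSpace ℝ (Fin n))) (hΩ : IsOpen Ω)
    (f : EuclideanSpace ℝ (Fin n) → EuclideanSpace ℝ (Fin m)) (hf : ContinuousOn f Ω)
    (x : EuclideanSpace ℝ (Fin n)) (hx : x ∈ Ω) :
    ({L | ∃ A ∈ BJac Ω f x, L = graphSub A} ⊆ SCderivFun Ω f x) ∧
    ({M | ∃ A ∈ BJac Ω f x, M = graphSub (ContinuousLinearMap.adjoint A)} ⊆
        SCderivStarFun Ω f x) ∧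
    ((∃ K : NNReal, ∃ U ∈ 𝓝 x, U ⊆ Ω ∧ LipschitzOnWith K f U) →
      (SCderivFun Ω f x = {L | ∃ A ∈ BJac Ω f x, L = graphSub A} ∧
       SCderivStarFun Ω f x = {M | ∃ A ∈ BJac Ω f x, M = graphSub (ContinuousLinearMap.adjoint A)} ∧
       ∃ δ > (0 : ℝ), ∀ x' ∈ Ω, ‖x' - x‖ < δ → (SCderivFun Ω f x').Nonempty)) := by
  refine ⟨?_, ?_, ?_⟩
  · rintro L ⟨A, hA, rfl⟩
    exact graphSub_mem_scderiv hΩ hf hx hA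
  · rintro M ⟨A, hA, rfl⟩
    exact ⟨graphSub A, graphSub_mem_scderiv hΩ hf hx hA, (adjSub_graphSub A).symm⟩
  · rintro ⟨K, U, hU, hUΩ, hlip⟩
    have h1 : SCderivFun Ω f x = {L | ∃ A ∈ BJac Ω f x, L = graphSub A} := by
      refine le_antisymm (scderiv_subset_bjac hx hU hUΩ hlip) ?_
      rintro L ⟨A, hA, rfl⟩
      exact graphSub_mem_scderiv hΩ hf hx hA
    refine ⟨h1, ?_, ?_⟩
    · ext M
      constructor
      · rintro ⟨L, hL, rfl⟩
        rw [h1] at hL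
        obtain ⟨A, hA, rfl⟩ := hL
        exact ⟨A, hA, adjSub_graphSub A⟩
      · rintro ⟨A, hA, rfl⟩
        refine ⟨graphSub A, ?_, (adjSub_graphSub A).symm⟩
        rw [h1]
        exact ⟨A, hA, rfl⟩
    · have hIU : interior U ∈ 𝓝 x := isOpen_interior.mem_nhds (mem_interior_iff_mem_nhds.mpr hU)
      obtain ⟨δ, hδpos, hball⟩ := Metric.mem_nhds_iff.mp hIU
      refine ⟨δ, hδpos, fun x' hx' hnorm => ?_⟩
      have hx'W : x' ∈ interior U := hball (by rw [Metric.mem_ball, dist_eq_norm]; exact hnorm)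
      have hU' : U ∈ 𝓝 x' := mem_nhds_iff.mpr ⟨interior U, interior_subset, isOpen_interior, hx'W⟩
      obtain ⟨A, hA⟩ := bjac_nonempty hU' hUΩ hlip
      exact ⟨graphSub A, graphSub_mem_scderiv hΩ hf hx' hA⟩
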